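/- arXiv:2411.18316 — 6 statements merged into one kernel-verified Lean document; each statement's English description precedes it below -/
import Mathlib

section
/- Let p be a prime, r ≥ 1, and R = ℤ/p^rℤ. A submodule C ⊆ R^n of rank k admits an encoder, i.e. an injective matrix G ∈ Mat_{n×k}(R) whose column space equals C, if and only if C is a direct summand of the R-module R^n. -/
section Aux

variable {p r : ℕ}

private lemma aux_neZero (hp : p.Prime) : NeZero (p ^ r) :=
  ⟨pow_ne_zero r hp.ne_zero⟩

private lemma aux_castHom_eq (hp : p.Prime) (hr : 1 ≤ r) (x : ZMod (p ^ r)) :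
    ZMod.castHom (dvd_pow_self p (by omega : r ≠ 0)) (ZMod p) x = ((x.val : ℕ) : ZMod p) := by
  haveI := aux_neZero (r := r) hp
  rw [ZMod.castHom_apply, ZMod.natCast_val]

private lemma aux_castHom_eq_zero_iff (hp : p.Prime) (hr : 1 ≤ r) (x : ZMod (p ^ r)) :
    ZMod.castHom (dvd_pow_self p (by omega : r ≠ 0)) (ZMod p) x = 0 ↔ p ∣ x.val := by
  rw [aux_castHom_eq hp hr, ZMod.natCast_eq_zero_iff]

private lemma aux_isUnit_of_not_dvd (hp : p.Prime) (hr : 1 ≤ r) (x : ZMod (p ^ r))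
    (h : ¬ p ∣ x.val) : IsUnit x := by
  haveI := aux_neZero (r := r) hp
  have hx : ((x.val : ℕ) : ZMod (p ^ r)) = x := by rw [ZMod.natCast_val, ZMod.cast_id]
  rw [← hx, ZMod.isUnit_iff_coprime]
  exact Nat.Coprime.pow_right r (Nat.Coprime.symm ((hp.coprime_iff_not_dvd).mpr h))

private lemma aux_isLocalRing (hp : p.Prime) (hr : 1 ≤ r) : IsLocalRing (ZMod (p ^ r)) := by
  haveI := aux_neZero (r := r) hp
  haveI : Fact (1 < p ^ r) := ⟨Nat.one_lt_pow (by omega) hp.one_lt⟩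
  refine IsLocalRing.of_isUnit_or_isUnit_one_sub_self fun a => ?_
  by_cases h : p ∣ a.val
  · right
    refine aux_isUnit_of_not_dvd hp hr _ fun h1 => ?_
    have h0 : (ZMod.castHom (dvd_pow_self p (by omega : r ≠ 0)) (ZMod p)) (1 - a) = 0 :=
      (aux_castHom_eq_zero_iff hp hr _).mpr h1
    rw [map_sub, map_one, (aux_castHom_eq_zero_iff hp hr a).mpr h, sub_zero] at h0
    haveI : Fact p.Prime := ⟨hp⟩
    exact one_ne_zero h0
  · exact Or.inl (aux_isUnit_of_not_dvd hp hr a h)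

private lemma aux_eq_p_mul (hp : p.Prime) (hr : 1 ≤ r) (x : ZMod (p ^ r))
    (h : p ∣ x.val) : ∃ y : ZMod (p ^ r), x = (p : ZMod (p ^ r)) * y := by
  haveI := aux_neZero (r := r) hp
  obtain ⟨m, hm⟩ := h
  refine ⟨(m : ZMod (p ^ r)), ?_⟩
  have hx : ((x.val : ℕ) : ZMod (p ^ r)) = x := by rw [ZMod.natCast_val, ZMod.cast_id]
  rw [← hx, hm]
  push_cast
  ring

/-- Backward direction: a direct summand of rank `k` admits an encoder. -/
private lemma aux_back_dir (p r n k : ℕ) (hp : p.Prime) (hr : 1 ≤ r)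
    (C : Submodule (ZMod (p ^ r)) (Fin n → ZMod (p ^ r)))
    (hrank : Module.rank (ZMod (p ^ r)) C = k)
    (D : Submodule (ZMod (p ^ r)) (Fin n → ZMod (p ^ r))) (hD : IsCompl C D) :
    ∃ G : Matrix (Fin n) (Fin k) (ZMod (p ^ r)),
        Function.Injective G.mulVecLin ∧ LinearMap.range G.mulVecLin = C := by
  haveI := aux_neZero (r := r) hp
  haveI : Fact (1 < p ^ r) := ⟨Nat.one_lt_pow (by omega) hp.one_lt⟩
  haveI := aux_isLocalRing hp hr
  set R := ZMod (p ^ r)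
  -- C is a direct summand, hence projective
  have hproj : Module.Projective R C :=
    Module.Projective.of_split C.subtype (C.projectionOnto D hD)
      (by ext x; simp)
  haveI := hproj
  haveI : Module.Finite R C := Module.Finite.of_finite
  haveI : Module.FinitePresentation R C := Module.finitePresentation_of_projective R C
  haveI : Module.Free R C := Module.free_of_flat_of_isLocalRing
  have hfr : Module.finrank R C = k := Module.finrank_eq_of_rank_eq hrank
  let b : Module.Basis (Fin k) R C := (Module.finBasis R C).reindex (finCongr hfr)
  let G : Matrix (Fin n) (Fin k) R := Matrix.of fun i j => (b j : Fin n → R) i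
  have hG : G.mulVecLin = C.subtype ∘ₗ (b.equivFun.symm : (Fin k → R) →ₗ[R] C) := by
    refine LinearMap.ext fun x => funext fun i => ?_
    simp [G, Matrix.mulVecLin_apply, Matrix.mulVec, dotProduct,
      Module.Basis.equivFun_symm_apply, Finset.sum_apply, mul_comm]
  refine ⟨G, ?_, ?_⟩
  · rw [hG]
    exact C.injective_subtype.comp b.equivFun.symm.injective
  · rw [hG, LinearMap.range_comp, LinearEquiv.range, Submodule.map_top,
      Submodule.range_subtype]

/-- Forward direction: the image of an encoder is a direct summand. -/
private lemma aux_fwd_dir (p r n k : ℕ) (hp : p.Prime) (hr : 1 ≤ r)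
    (C : Submodule (ZMod (p ^ r)) (Fin n → ZMod (p ^ r)))
    (G : Matrix (Fin n) (Fin k) (ZMod (p ^ r)))
    (hinj : Function.Injective G.mulVecLin)
    (hrange : LinearMap.range G.mulVecLin = C) :
    ∃ D : Submodule (ZMod (p ^ r)) (Fin n → ZMod (p ^ r)), IsCompl C D := by
  haveI := aux_neZero (r := r) hp
  haveI : Fact p.Prime := ⟨hp⟩
  let φ : ZMod (p ^ r) →+* ZMod p := ZMod.castHom (dvd_pow_self p (by omega : r ≠ 0)) (ZMod p)
  -- lifting map
  let ρ : ZMod p → ZMod (p ^ r) := fun a => ((a.val : ℕ) : ZMod (p ^ r))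
  have hρ : ∀ a : ZMod p, φ (ρ a) = a := by
    intro a
    show φ ((a.val : ℕ) : ZMod (p ^ r)) = a
    rw [map_natCast, ZMod.natCast_val, ZMod.cast_id]
  -- reduction of G mod p
  let Gb : Matrix (Fin n) (Fin k) (ZMod p) := G.map φ
  -- Gb is injective
  have hGb : LinearMap.ker Gb.mulVecLin = ⊥ := by
    rw [Submodule.eq_bot_iff]
    intro v hv
    rw [LinearMap.mem_ker, Matrix.mulVecLin_apply] at hv
    -- lift v
    set vt : Fin k → ZMod (p ^ r) := fun j => ρ (v j) with hvt
    have hdvd : ∀ i, p ∣ ((G.mulVec vt) i).val := by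
      intro i
      rw [← aux_castHom_eq_zero_iff hp hr]
      show φ (∑ j, G i j * vt j) = 0
      rw [map_sum]
      have heq : ∀ j, φ (G i j * vt j) = Gb i j * v j := by
        intro j
        rw [map_mul, hρ]
        rfl
      simp_rw [heq]
      have := congrFun hv i
      simpa [Matrix.mulVec, dotProduct] using this
    have hzero : G.mulVec ((p : ZMod (p ^ r)) ^ (r - 1) • vt) = 0 := by
      rw [Matrix.mulVec_smul]
      funext i
      obtain ⟨y, hy⟩ := aux_eq_p_mul hp hr _ (hdvd i)
      show (p : ZMod (p ^ r)) ^ (r - 1) • (G.mulVec vt) i = 0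
      rw [hy, smul_eq_mul, ← mul_assoc, ← pow_succ]
      have hrr : r - 1 + 1 = r := by omega
      rw [hrr]
      have hpr : ((p : ZMod (p ^ r))) ^ r = ((p ^ r : ℕ) : ZMod (p ^ r)) := by push_cast; ring
      rw [hpr, ZMod.natCast_self, zero_mul]
    have hv0 : (p : ZMod (p ^ r)) ^ (r - 1) • vt = 0 := by
      apply hinj
      rw [map_zero, Matrix.mulVecLin_apply]
      exact hzero
    funext j
    have hj : (p : ZMod (p ^ r)) ^ (r - 1) * vt j = 0 := by
      have := congrFun hv0 j
      simpa using this
    -- conclude v j = 0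
    have hcast : ((p ^ (r - 1) * (v j).val : ℕ) : ZMod (p ^ r)) = 0 := by
      push_cast
      exact hj
    rw [ZMod.natCast_eq_zero_iff] at hcast
    have hpr : p ^ r = p ^ (r - 1) * p := by
      rw [← pow_succ]
      congr 1
      omega
    rw [hpr] at hcast
    have hdvd2 : p ∣ (v j).val :=
      (mul_dvd_mul_iff_left (a := p ^ (r - 1)) (pow_ne_zero _ hp.ne_zero)).mp hcast
    have hlt : (v j).val < p := ZMod.val_lt (v j)
    have hvj : (v j).val = 0 := Nat.eq_zero_of_dvd_of_lt hdvd2 hlt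
    simpa [ZMod.val_eq_zero] using hvj
  -- left inverse of Gb over the field ZMod p
  obtain ⟨g, hg⟩ := LinearMap.exists_leftInverse_of_injective Gb.mulVecLin hGb
  let Bb : Matrix (Fin k) (Fin n) (ZMod p) := LinearMap.toMatrix' g
  have hBb : Bb * Gb = 1 := by
    apply Matrix.toLin'.injective
    rw [Matrix.toLin'_mul, Matrix.toLin'_one, Matrix.toLin'_toMatrix']
    rw [Matrix.toLin'_apply']
    exact hg
  -- lift Bb
  let B : Matrix (Fin k) (Fin n) (ZMod (p ^ r)) := Bb.map ρ
  have hBG : ∀ i j, φ ((B * G) i j) = (1 : Matrix (Fin k) (Fin k) (ZMod p)) i j := by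
    intro i j
    rw [← hBb]
    show φ (∑ l, B i l * G l j) = ∑ l, Bb i l * Gb l j
    rw [map_sum]
    congr 1
    funext l
    show φ (ρ (Bb i l) * G l j) = Bb i l * Gb l j
    rw [map_mul, hρ]
    rfl
  -- N := 1 - B*G has entries divisible by p, hence is nilpotent
  set N : Matrix (Fin k) (Fin k) (ZMod (p ^ r)) := 1 - B * G with hN
  have hNdvd : ∀ i j, ∃ y : ZMod (p ^ r), N i j = (p : ZMod (p ^ r)) * y := by
    intro i j
    apply aux_eq_p_mul hp hr
    rw [← aux_castHom_eq_zero_iff hp hr]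
    rw [hN, Matrix.sub_apply, map_sub, hBG i j]
    have h1 : φ ((1 : Matrix (Fin k) (Fin k) (ZMod (p ^ r))) i j)
        = (1 : Matrix (Fin k) (Fin k) (ZMod p)) i j := by
      by_cases h : i = j <;> simp [Matrix.one_apply, h]
    rw [h1, sub_self]
  choose N' hN' using fun i => hNdvd i
  have hNfac : N = (p : ZMod (p ^ r)) • Matrix.of (fun i j => N' i j) := by
    funext i j
    simpa [Matrix.smul_apply, smul_eq_mul] using hN' i j
  have hNnil : IsNilpotent N := by
    refine ⟨r, ?_⟩
    rw [hNfac, smul_pow]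
    have hpr : ((p : ZMod (p ^ r))) ^ r = ((p ^ r : ℕ) : ZMod (p ^ r)) := by push_cast; ring
    rw [hpr, ZMod.natCast_self, zero_smul]
  -- hence B * G is invertible, and we obtain a genuine left inverse L of G
  have hUnit : IsUnit (B * G) := by
    have := hNnil.isUnit_one_sub
    rwa [hN, sub_sub_cancel] at this
  obtain ⟨u, hu⟩ := hUnit
  let L : Matrix (Fin k) (Fin n) (ZMod (p ^ r)) := (↑u⁻¹ : Matrix (Fin k) (Fin k) (ZMod (p ^ r))) * B
  have hLG : L * G = 1 := by
    show (↑u⁻¹ : Matrix (Fin k) (Fin k) (ZMod (p ^ r))) * B * G = 1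
    rw [Matrix.mul_assoc, ← hu, Units.inv_mul]
  -- projection onto C
  have hmem : ∀ x : Fin n → ZMod (p ^ r), G.mulVecLin (L.mulVecLin x) ∈ C := by
    intro x
    rw [← hrange]
    exact LinearMap.mem_range_self _ _
  let π : (Fin n → ZMod (p ^ r)) →ₗ[ZMod (p ^ r)] C := (G.mulVecLin ∘ₗ L.mulVecLin).codRestrict C
    (fun x => hmem x)
  have hπ : ∀ x : C, π x = x := by
    intro x
    have hx : (x : Fin n → ZMod (p ^ r)) ∈ LinearMap.range G.mulVecLin := by
      rw [hrange]; exact x.2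
    obtain ⟨w, hw⟩ := hx
    apply Subtype.ext
    show G.mulVec (L.mulVec (x : Fin n → ZMod (p ^ r))) = (x : Fin n → ZMod (p ^ r))
    rw [← hw]
    show G.mulVec (L.mulVec (G.mulVec w)) = G.mulVec w
    rw [Matrix.mulVec_mulVec, Matrix.mulVec_mulVec, Matrix.mul_assoc, hLG, Matrix.mul_one]
  exact ⟨LinearMap.ker π, LinearMap.isCompl_of_proj hπ⟩

end Aux

/-- Let `p` be a prime, `r ≥ 1`, and `R = ℤ/p^rℤ`. A submodule
`C ⊆ R^n` of rank `k` admits an encoder, i.e. an injective matrix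
`G ∈ Mat_{n×k}(R)` whose column space equals `C`, if and only if `C` is a direct
summand of the `R`-module `R^n`. -/
theorem encoder_iff_splitting (p r n k : ℕ) (hp : p.Prime) (hr : 1 ≤ r)
    (C : Submodule (ZMod (p ^ r)) (Fin n → ZMod (p ^ r)))
    (hrank : Module.rank (ZMod (p ^ r)) C = k) :
    (∃ G : Matrix (Fin n) (Fin k) (ZMod (p ^ r)),
        Function.Injective G.mulVecLin ∧ LinearMap.range G.mulVecLin = C) ↔
      ∃ D : Submodule (ZMod (p ^ r)) (Fin n → ZMod (p ^ r)), IsCompl C D := by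
  constructor
  · rintro ⟨G, hinj, hrange⟩
    exact aux_fwd_dir p r n k hp hr C G hinj hrange
  · rintro ⟨D, hD⟩
    exact aux_back_dir p r n k hp hr C hrank D hD
end

section
/- Let p be a prime, r ≥ 1, and R = ℤ/p^rℤ. If C ⊆ R^n is a nonzero splitting linear block code (a direct summand of R^n), then the minimum distance of C equals the minimum distance of its reduction modulo p: min{ω_H(c) : c ∈ C, c ≠ 0} = min{ω_H(c̄) : c̄ ∈ (C mod p), c̄ ≠ 0}. -/
private lemma hn_mono {n : ℕ} {α β : Type*} [DecidableEq α] [Zero α] [DecidableEq β] [Zero β]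
    (x : Fin n → α) (y : Fin n → β) (h : ∀ i, x i = 0 → y i = 0) :
    hammingNorm y ≤ hammingNorm x := by
  apply Finset.card_le_card
  intro i hi
  simp only [Finset.mem_filter, Finset.mem_univ, true_and] at *
  exact fun hx => hi (h i hx)

/-- Let `p` be a prime, `r ≥ 1`, and `R = ℤ/p^rℤ`. If
`C ⊆ R^n` is a nonzero splitting linear block code (a direct summand of `R^n`),
then the minimum distance of `C` equals the minimum distance of its reduction
modulo `p`. -/
theorem minDist_eq_minDist_mod_p (p r n : ℕ) (hp : p.Prime) (hr : 1 ≤ r)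
    (C : Submodule (ZMod (p ^ r)) (Fin n → ZMod (p ^ r)))
    (hC : C ≠ ⊥)
    (hsplit : ∃ D : Submodule (ZMod (p ^ r)) (Fin n → ZMod (p ^ r)), IsCompl C D) :
    sInf {w : ℕ | ∃ c ∈ C, c ≠ 0 ∧ hammingNorm c = w} =
      sInf {w : ℕ | ∃ cbar ∈ (fun (v : Fin n → ZMod (p ^ r)) (i : Fin n) =>
              ZMod.castHom (dvd_pow_self p (Nat.one_le_iff_ne_zero.mp hr)) (ZMod p) (v i)) ''
            (C : Set (Fin n → ZMod (p ^ r))),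
          cbar ≠ 0 ∧ hammingNorm cbar = w} := by
  haveI : NeZero (p ^ r) := ⟨pow_ne_zero r hp.ne_zero⟩
  set π : ZMod (p ^ r) →+* ZMod p :=
    ZMod.castHom (dvd_pow_self p (Nat.one_le_iff_ne_zero.mp hr)) (ZMod p) with hπdef
  -- kernel of π
  have hπ0 : ∀ x : ZMod (p ^ r), π x = 0 ↔ p ∣ x.val := by
    intro x
    rw [hπdef, ZMod.castHom_apply, ← ZMod.natCast_val, ZMod.natCast_eq_zero_iff]
  have hval : ∀ x : ZMod (p ^ r), ((x.val : ℕ) : ZMod (p ^ r)) = x := fun x => by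
    rw [ZMod.natCast_val, ZMod.cast_id]
  obtain ⟨D, hD⟩ := hsplit
  set e : (Fin n → ZMod (p ^ r)) →ₗ[ZMod (p ^ r)] (Fin n → ZMod (p ^ r)) :=
    C.subtype.comp (C.linearProjOfIsCompl D hD) with hedef
  have he_mem : ∀ v, e v ∈ C := fun v => (C.linearProjOfIsCompl D hD v).2
  have he_id : ∀ v ∈ C, e v = v := by
    intro v hv
    have := Submodule.linearProjOfIsCompl_apply_left hD ⟨v, hv⟩
    exact congrArg Subtype.val this
  -- Claim A: any nonzero codeword dominates a nonzero reduced codeword.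
  have claimA : ∀ c ∈ C, c ≠ 0 → ∃ c', c' ∈ C ∧ (fun i => π (c' i)) ≠ 0 ∧
      hammingNorm (fun i => π (c' i)) ≤ hammingNorm c := by
    intro c hc hc0
    have hne : (Finset.univ.filter fun i => c i ≠ 0).Nonempty := by
      rcases Function.ne_iff.mp hc0 with ⟨i, hi⟩
      exact ⟨i, by simpa using hi⟩
    obtain ⟨i0, hi0mem, hi0min⟩ :=
      Finset.exists_min_image _ (fun i => ((c i).val).factorization p) hne
    set k := ((c i0).val).factorization p with hkdef
    have hci0 : c i0 ≠ 0 := by simpa using hi0mem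
    have hvi0 : (c i0).val ≠ 0 := fun h => hci0 ((ZMod.val_eq_zero _).mp h)
    have hdvd : ∀ i, p ^ k ∣ (c i).val := by
      intro i
      by_cases h : c i = 0
      · simp [h]
      · exact dvd_trans (pow_dvd_pow p (hi0min i (by simpa using h))) (Nat.ordProj_dvd _ p)
    have hknot : ¬ p ^ (k + 1) ∣ (c i0).val := Nat.pow_succ_factorization_not_dvd hvi0 hp
    have hkr : k < r := by
      have h1 : p ^ k ≤ (c i0).val := Nat.le_of_dvd (Nat.pos_of_ne_zero hvi0) (hdvd i0)
      have h2 : (c i0).val < p ^ r := ZMod.val_lt _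
      exact (Nat.pow_lt_pow_iff_right hp.one_lt).mp (lt_of_le_of_lt h1 h2)
    set d : Fin n → ZMod (p ^ r) := fun i => (((c i).val / p ^ k : ℕ) : ZMod (p ^ r)) with hddef
    have hd : ((p ^ k : ℕ) : ZMod (p ^ r)) • d = c := by
      funext i
      show ((p ^ k : ℕ) : ZMod (p ^ r)) * (((c i).val / p ^ k : ℕ) : ZMod (p ^ r)) = c i
      rw [← Nat.cast_mul, Nat.mul_div_cancel' (hdvd i), ZMod.natCast_val, ZMod.cast_id]
    refine ⟨e d, he_mem d, ?_, ?_⟩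
    · -- computation of p^k • e d
      have hkc' : ((p ^ k : ℕ) : ZMod (p ^ r)) • e d = c := by
        rw [← map_smul, hd, he_id c hc]
      -- nonzero at i0
      have hmain : ¬ p ∣ ((e d) i0).val := by
        rintro ⟨t, ht⟩
        apply hknot
        have hcalc : c i0 = ((p ^ (k + 1) * t : ℕ) : ZMod (p ^ r)) := by
          have h1 : ((p ^ k : ℕ) : ZMod (p ^ r)) * (e d) i0 = c i0 := congrFun hkc' i0
          rw [← h1, ← hval ((e d) i0), ht]
          push_cast [pow_succ]
          ring
        rw [hcalc, ZMod.val_natCast]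
        exact (Nat.dvd_mod_iff (pow_dvd_pow p hkr)).mpr ⟨t, rfl⟩
      rw [Function.ne_iff]
      exact ⟨i0, fun h => hmain ((hπ0 _).mp h)⟩
    · apply hn_mono
      intro i hi
      rw [hπ0]
      have hkc' : ((p ^ k : ℕ) : ZMod (p ^ r)) • e d = c := by
        rw [← map_smul, hd, he_id c hc]
      have h1 : ((p ^ k : ℕ) : ZMod (p ^ r)) * (e d) i = 0 := by
        have := congrFun hkc' i
        simpa [hi] using this
      have h2 : p ^ r ∣ p ^ k * ((e d) i).val := by
        rw [← ZMod.natCast_eq_zero_iff _ (p ^ r), Nat.cast_mul, hval]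
        exact h1
      have h2' : p ^ k * p ^ (r - k) ∣ p ^ k * ((e d) i).val := by
        rw [show p ^ k * p ^ (r - k) = p ^ r by rw [← pow_add]; congr 1; omega]
        exact h2
      have h3 : p ^ (r - k) ∣ ((e d) i).val :=
        (Nat.mul_dvd_mul_iff_left (pow_pos hp.pos k)).mp h2'
      exact dvd_trans (dvd_pow_self p (by omega : r - k ≠ 0)) h3
  -- Claim B: any nonzero reduced codeword dominates a nonzero codeword.
  have claimB : ∀ c ∈ C, (fun i => π (c i)) ≠ 0 → ∃ c'', c'' ∈ C ∧ c'' ≠ 0 ∧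
      hammingNorm c'' ≤ hammingNorm (fun i => π (c i)) := by
    intro c hc hπc
    refine ⟨((p ^ (r - 1) : ℕ) : ZMod (p ^ r)) • c, C.smul_mem _ hc, ?_, ?_⟩
    all_goals
      have hsupp : ∀ i, (((p ^ (r - 1) : ℕ) : ZMod (p ^ r)) • c) i = 0 ↔ p ∣ (c i).val := by
        intro i
        show ((p ^ (r - 1) : ℕ) : ZMod (p ^ r)) * c i = 0 ↔ _
        have key : ((p ^ (r - 1) : ℕ) : ZMod (p ^ r)) * c i
            = (((p ^ (r - 1) * (c i).val : ℕ)) : ZMod (p ^ r)) := by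
          rw [Nat.cast_mul, hval]
        rw [key, ZMod.natCast_eq_zero_iff]
        constructor
        · intro h
          have h' : p ^ (r - 1) * p ∣ p ^ (r - 1) * (c i).val := by
            rw [show p ^ (r - 1) * p = p ^ r by rw [← pow_succ]; congr 1; omega]
            exact h
          exact (Nat.mul_dvd_mul_iff_left (pow_pos hp.pos (r - 1))).mp h'
        · rintro ⟨t, ht⟩
          rw [ht, ← mul_assoc, ← pow_succ, show r - 1 + 1 = r by omega]
          exact Dvd.intro t rfl
    · rcases Function.ne_iff.mp hπc with ⟨i, hi⟩
      rw [Function.ne_iff]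
      exact ⟨i, fun h => hi ((hπ0 _).mpr ((hsupp i).mp h))⟩
    · exact hn_mono _ _ fun i hi => (hsupp i).mpr ((hπ0 _).mp hi)
  -- Now compare the two infima.
  obtain ⟨c0, hc0C, hc00⟩ := Submodule.exists_mem_ne_zero_of_ne_bot hC
  have hWne : {w : ℕ | ∃ c ∈ C, c ≠ 0 ∧ hammingNorm c = w}.Nonempty :=
    ⟨_, c0, hc0C, hc00, rfl⟩
  obtain ⟨c1, hc1C, hc1π, _⟩ := claimA c0 hc0C hc00
  have hW'ne : {w : ℕ | ∃ cbar ∈ (fun (v : Fin n → ZMod (p ^ r)) (i : Fin n) => π (v i)) ''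
      (C : Set (Fin n → ZMod (p ^ r))), cbar ≠ 0 ∧ hammingNorm cbar = w}.Nonempty :=
    ⟨_, (fun i => π (c1 i)), ⟨c1, hc1C, rfl⟩, hc1π, rfl⟩
  apply le_antisymm
  · obtain ⟨cbar, ⟨c, hcC, hceq⟩, hcbar0, hw⟩ := Nat.sInf_mem hW'ne
    obtain ⟨c'', hc''C, hc''0, hc''w⟩ := claimB c hcC (by rw [show (fun i => π (c i)) = cbar from hceq]; exact hcbar0)
    refine le_trans (Nat.sInf_le ⟨c'', hc''C, hc''0, rfl⟩) ?_
    rw [← hw]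
    calc hammingNorm c'' ≤ hammingNorm (fun i => π (c i)) := hc''w
      _ = hammingNorm cbar := by rw [show (fun i => π (c i)) = cbar from hceq]
  · obtain ⟨c, hcC, hc0, hw⟩ := Nat.sInf_mem hWne
    obtain ⟨c', hc'C, hc'π, hc'w⟩ := claimA c hcC hc0
    refine le_trans (Nat.sInf_le ⟨(fun i => π (c' i)), ⟨c', hc'C, rfl⟩, hc'π, rfl⟩) ?_
    rw [← hw]
    exact hc'w
end

section
/- Let p be a prime, r ≥ 1, and R = ℤ/p^rℤ. Let C ⊆ R[z]^n be a convolutional code of rank k and let G(z) ∈ Mat_{n×k}(R[z]) be an encoder of C with the Predictable Degree Property, i.e. its column-wise leading coefficient matrix G_h ∈ Mat_{n×k}(R) is injective. Then G(z) has minimal complexity among all encoders of C: for every encoder G'(z) ∈ Mat_{n×k}(R[z]) of C one has δ_{G(z)} ≤ δ_{G'(z)}, where δ denotes the sum of the column degrees. In particular δ_{G(z)} = δ_C. -/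
/-- The `i`-th constraint length of a polynomial matrix `G(z)`: the maximum
degree of the entries of the `i`-th column. -/
def constraintLength {R : Type*} [Semiring R] {n k : ℕ}
    (G : Matrix (Fin n) (Fin k) (Polynomial R)) (i : Fin k) : ℕ :=
  Finset.univ.sup fun j => (G j i).natDegree

/-- The complexity (degree) of a polynomial matrix: the sum of its
constraint lengths. -/
def complexity {R : Type*} [Semiring R] {n k : ℕ}
    (G : Matrix (Fin n) (Fin k) (Polynomial R)) : ℕ :=
  ∑ i, constraintLength G i

/-- The column-wise leading coefficient matrix `G_h` of `G(z)`: its `(j,i)`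
entry is the coefficient of `z^{ν_i}` in the `(j,i)` entry of `G(z)`. -/
def leadingCoeffMatrix {R : Type*} [Semiring R] {n k : ℕ}
    (G : Matrix (Fin n) (Fin k) (Polynomial R)) : Matrix (Fin n) (Fin k) R :=
  fun j i => (G j i).coeff (constraintLength G i)

open Polynomial

lemma pdp_deg_le {R : Type*} [CommRing R] {n k : ℕ}
    (G : Matrix (Fin n) (Fin k) (Polynomial R))
    (hPDP : Function.Injective (leadingCoeffMatrix G).mulVecLin)
    (u : Fin k → Polynomial R) (i₀ : Fin k) (hu : u i₀ ≠ 0) :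
    (u i₀).natDegree + constraintLength G i₀ ≤
      Finset.univ.sup fun j => ((G.mulVec u) j).natDegree := by
  classical
  set S : Finset (Fin k) := Finset.univ.filter (fun i => u i ≠ 0) with hS
  have hi₀ : i₀ ∈ S := by simp [hS, hu]
  set N : ℕ := S.sup (fun i => (u i).natDegree + constraintLength G i) with hNdef
  have hN0 : (u i₀).natDegree + constraintLength G i₀ ≤ N := Finset.le_sup (f := fun i => (u i).natDegree + constraintLength G i) hi₀
  set v : Fin k → R := fun i =>
    if u i ≠ 0 ∧ (u i).natDegree + constraintLength G i = N then (u i).leadingCoeff else 0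
    with hv
  have key : ∀ j, ((G.mulVec u) j).coeff N = (leadingCoeffMatrix G).mulVec v j := by
    intro j
    have h1 : (G.mulVec u) j = ∑ i, G j i * u i := rfl
    have h2 : (leadingCoeffMatrix G).mulVec v j = ∑ i, (leadingCoeffMatrix G) j i * v i := rfl
    rw [h1, h2, Polynomial.finset_sum_coeff]
    apply Finset.sum_congr rfl
    intro i _
    by_cases h0 : u i = 0
    · simp [h0, hv]
    · have hiS : i ∈ S := by simp [hS, h0]
      have hle : (u i).natDegree + constraintLength G i ≤ N := Finset.le_sup (f := fun i => (u i).natDegree + constraintLength G i) hiS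
      by_cases hd : (u i).natDegree + constraintLength G i = N
      · by_cases hg : (G j i).natDegree < constraintLength G i
        · have h1 : (G j i * u i).natDegree < N := by
            calc (G j i * u i).natDegree ≤ (G j i).natDegree + (u i).natDegree :=
                  natDegree_mul_le
              _ < constraintLength G i + (u i).natDegree := by omega
              _ = N := by omega
          rw [Polynomial.coeff_eq_zero_of_natDegree_lt h1]
          have hz : (leadingCoeffMatrix G) j i = 0 :=
            Polynomial.coeff_eq_zero_of_natDegree_lt hg
          simp [hz]
        · have hge : (G j i).natDegree = constraintLength G i := by
            have : (G j i).natDegree ≤ constraintLength G i :=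
              Finset.le_sup (f := fun j => (G j i).natDegree) (Finset.mem_univ j)
            omega
          have hN' : N = (G j i).natDegree + (u i).natDegree := by omega
          rw [hN', Polynomial.coeff_mul_degree_add_degree]
          have hz : (leadingCoeffMatrix G) j i = (G j i).leadingCoeff := by
            show (G j i).coeff (constraintLength G i) = (G j i).coeff (G j i).natDegree
            rw [hge]
          rw [hz, hv]
          simp only [h0, hd, ne_eq, not_false_eq_true, and_self, if_true]
      · have hlt : (u i).natDegree + constraintLength G i < N := lt_of_le_of_ne hle hd
        have h1 : (G j i * u i).natDegree < N := by
          calc (G j i * u i).natDegree ≤ (G j i).natDegree + (u i).natDegree :=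
                natDegree_mul_le
            _ ≤ constraintLength G i + (u i).natDegree :=
                Nat.add_le_add_right (Finset.le_sup (f := fun j => (G j i).natDegree) (Finset.mem_univ j)) _
            _ < N := by omega
        rw [Polynomial.coeff_eq_zero_of_natDegree_lt h1]
        simp [hv, hd]
  have hSne : S.Nonempty := ⟨i₀, hi₀⟩
  obtain ⟨i₁, hi₁S, hi₁⟩ := Finset.exists_mem_eq_sup S hSne
    (fun i => (u i).natDegree + constraintLength G i)
  have hu₁ : u i₁ ≠ 0 := by simpa [hS] using hi₁S
  have hv1 : v i₁ ≠ 0 := by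
    rw [hv]
    simp only [hu₁, hNdef, hi₁, ne_eq, not_false_eq_true, and_self, if_true]
    exact Polynomial.leadingCoeff_ne_zero.mpr hu₁
  have hvne : v ≠ 0 := fun h => hv1 (by rw [h]; rfl)
  have hmv : (leadingCoeffMatrix G).mulVec v ≠ 0 := by
    intro h
    apply hvne
    apply hPDP
    simpa [Matrix.mulVecLin_apply] using h
  obtain ⟨j, hj⟩ := Function.ne_iff.mp hmv
  have hcoeff : ((G.mulVec u) j).coeff N ≠ 0 := by rw [key j]; exact hj
  calc (u i₀).natDegree + constraintLength G i₀ ≤ N := hN0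
    _ ≤ ((G.mulVec u) j).natDegree := Polynomial.le_natDegree_of_ne_zero hcoeff
    _ ≤ Finset.univ.sup fun j => ((G.mulVec u) j).natDegree :=
        Finset.le_sup (f := fun j => ((G.mulVec u) j).natDegree) (Finset.mem_univ j)

/-- Let `p` be a prime, `r ≥ 1`, and `R = ℤ/p^rℤ`. Let
`C ⊆ R[z]^n` be a convolutional code of rank `k` and let
`G(z) ∈ Mat_{n×k}(R[z])` be an encoder of `C` with the Predictable Degree
Property, i.e. its column-wise leading coefficient matrix `G_h ∈ Mat_{n×k}(R)`
is injective. Then `G(z)` has minimal complexity among all encoders of `C`: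
for every encoder `G'(z)` of `C` one has `δ_{G(z)} ≤ δ_{G'(z)}`. In particular
`δ_{G(z)} = δ_C`. -/
theorem pdp_encoder_minimal_complexity (p r n k : ℕ) (hp : p.Prime) (hr : 1 ≤ r)
    (C : Submodule (Polynomial (ZMod (p ^ r))) (Fin n → Polynomial (ZMod (p ^ r))))
    (G : Matrix (Fin n) (Fin k) (Polynomial (ZMod (p ^ r))))
    (hGinj : Function.Injective G.mulVecLin)
    (hGrange : LinearMap.range G.mulVecLin = C)
    (hPDP : Function.Injective (leadingCoeffMatrix G).mulVecLin) :
    (∀ G' : Matrix (Fin n) (Fin k) (Polynomial (ZMod (p ^ r))),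
        Function.Injective G'.mulVecLin → LinearMap.range G'.mulVecLin = C →
          complexity G ≤ complexity G') ∧
      complexity G =
        sInf {δ : ℕ | ∃ G' : Matrix (Fin n) (Fin k) (Polynomial (ZMod (p ^ r))),
          Function.Injective G'.mulVecLin ∧ LinearMap.range G'.mulVecLin = C ∧
            complexity G' = δ} := by
  classical
  haveI : Fact (1 < p ^ r) := ⟨Nat.one_lt_pow (by omega) hp.one_lt⟩
  have main : ∀ G' : Matrix (Fin n) (Fin k) (Polynomial (ZMod (p ^ r))),
      Function.Injective G'.mulVecLin → LinearMap.range G'.mulVecLin = C →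
        complexity G ≤ complexity G' := by
    intro G' hG'inj hG'range
    -- construct U with G * U = G'
    have hmem : ∀ j, (fun i => G' i j) ∈ LinearMap.range G.mulVecLin := by
      intro j
      rw [hGrange, ← hG'range]
      refine ⟨Pi.single j 1, ?_⟩
      funext i
      simp [Matrix.mulVecLin_apply, Matrix.mulVec_single]
    choose u huu using hmem
    set U : Matrix (Fin k) (Fin k) (Polynomial (ZMod (p ^ r))) :=
      Matrix.of fun l j => u j l with hUdef
    have hGU : G * U = G' := by
      refine Matrix.ext fun i j => ?_
      have h := congrFun (huu j) i
      simpa [Matrix.mul_apply, Matrix.mulVecLin_apply, Matrix.mulVec,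
        dotProduct, hUdef] using h
    -- construct V with G' * V = G
    have hmem' : ∀ j, (fun i => G i j) ∈ LinearMap.range G'.mulVecLin := by
      intro j
      rw [hG'range, ← hGrange]
      refine ⟨Pi.single j 1, ?_⟩
      funext i
      simp [Matrix.mulVecLin_apply, Matrix.mulVec_single]
    choose w hww using hmem'
    set V : Matrix (Fin k) (Fin k) (Polynomial (ZMod (p ^ r))) :=
      Matrix.of fun l j => w j l with hVdef
    have hGV : G' * V = G := by
      refine Matrix.ext fun i j => ?_
      have h := congrFun (hww j) i
      simpa [Matrix.mul_apply, Matrix.mulVecLin_apply, Matrix.mulVec,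
        dotProduct, hVdef] using h
    -- U * V = 1
    have hUV : U * V = 1 := by
      have h1 : ∀ x, (U * V).mulVec x = x := by
        intro x
        apply hGinj
        show G.mulVecLin _ = G.mulVecLin x
        simp only [Matrix.mulVecLin_apply]
        rw [Matrix.mulVec_mulVec, ← Matrix.mul_assoc, hGU, hGV]
      refine Matrix.ext fun i j => ?_
      have h := congrFun (h1 (Pi.single j 1)) i
      simpa [Matrix.mulVec_single, Matrix.one_apply, Pi.single_apply, eq_comm] using h
    have hdet : U.det * V.det = 1 := by rw [← Matrix.det_mul, hUV, Matrix.det_one]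
    have hdetne : U.det ≠ 0 := by
      intro h
      rw [h, zero_mul] at hdet
      exact zero_ne_one hdet
    have hperm : ∃ σ : Equiv.Perm (Fin k), ∀ i, U (σ i) i ≠ 0 := by
      by_contra hc
      push_neg at hc
      apply hdetne
      rw [Matrix.det_apply]
      apply Finset.sum_eq_zero
      intro σ _
      obtain ⟨i, hi⟩ := hc σ
      rw [Finset.prod_eq_zero (f := fun l => U (σ l) l) (Finset.mem_univ i) hi, smul_zero]
    obtain ⟨σ, hσ⟩ := hperm
    have hcol : ∀ j, constraintLength G (σ j) ≤ constraintLength G' j := by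
      intro j
      have hle := pdp_deg_le G hPDP (fun l => U l j) (σ j) (hσ j)
      have heq : (Finset.univ.sup fun j' => ((G.mulVec (fun l => U l j)) j').natDegree)
          = constraintLength G' j := by
        apply Finset.sup_congr rfl
        intro j' _
        congr 1
        have h := congrFun (congrFun hGU j') j
        rw [← h]
        simp [Matrix.mul_apply, Matrix.mulVec, dotProduct]
      calc constraintLength G (σ j)
          ≤ (U (σ j) j).natDegree + constraintLength G (σ j) := le_add_self
        _ ≤ _ := hle
        _ = constraintLength G' j := heq
    calc complexity G = ∑ j, constraintLength G (σ j) :=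
          (Equiv.sum_comp σ (fun i => constraintLength G i)).symm
      _ ≤ ∑ j, constraintLength G' j := Finset.sum_le_sum fun j _ => hcol j
      _ = complexity G' := rfl
  refine ⟨main, ?_⟩
  apply le_antisymm
  · exact le_csInf ⟨complexity G, G, hGinj, hGrange, rfl⟩
      (by rintro δ ⟨G', h1, h2, rfl⟩; exact main G' h1 h2)
  · exact csInf_le (OrderBot.bddBelow _) ⟨G, hGinj, hGrange, rfl⟩
end

section
/- Let p be a prime, r ≥ 1, and R = ℤ/p^rℤ. Let G(z) ∈ Mat_{n×k}(R[z]) be an injective polynomial matrix with column degrees ν_1, …, ν_k whose column-wise leading coefficient matrix G_h ∈ Mat_{n×k}(R) is injective (the Predictable Degree Property). Then the maximum of the degrees of the k×k (full-size) minors of G(z) equals δ_{G(z)} = Σ_{i=1}^k ν_i. -/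
section Aux

open Polynomial Finset Matrix

/-- Coefficient of a product of polynomials at the sum of degree bounds. -/
lemma aux_coeff_prod_varying {R : Type*} [CommSemiring R] {ι : Type*} (s : Finset ι)
    (f : ι → R[X]) (d : ι → ℕ) (h : ∀ i ∈ s, (f i).natDegree ≤ d i) :
    (∏ i ∈ s, f i).coeff (∑ i ∈ s, d i) = ∏ i ∈ s, (f i).coeff (d i) := by
  classical
  induction s using Finset.induction with
  | empty => simp
  | insert a s hx ih =>
    rw [Finset.prod_insert hx, Finset.sum_insert hx, Finset.prod_insert hx,
      Polynomial.coeff_mul_add_eq_of_natDegree_le (h a (Finset.mem_insert_self a s))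
        ((Polynomial.natDegree_prod_le s f).trans
          (Finset.sum_le_sum fun i hi => h i (Finset.mem_insert_of_mem hi))),
      ih fun i hi => h i (Finset.mem_insert_of_mem hi)]

/-- Cauchy–Binet style vanishing: over a field, if a matrix has injective
`mulVecLin` then some full-size minor is nonzero. -/
lemma aux_exists_minor_ne_zero_of_injective {F : Type*} [Field F] {n k : ℕ}
    (A : Matrix (Fin n) (Fin k) F) (hA : Function.Injective A.mulVecLin) :
    ∃ ρ : Fin k ↪ Fin n, (A.submatrix ρ id).det ≠ 0 := by
  classical
  by_contra hall
  push_neg at hall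
  have hsub : ∀ f : Fin k → Fin n, (A.submatrix f id).det = 0 := by
    intro f
    by_cases hf : Function.Injective f
    · exact hall ⟨f, hf⟩
    · obtain ⟨i, j, hij, hne⟩ : ∃ i j, f i = f j ∧ i ≠ j := by
        simp only [Function.Injective, not_forall] at hf
        obtain ⟨i, j, h1, h2⟩ := hf
        exact ⟨i, j, h1, h2⟩
      exact Matrix.det_zero_of_row_eq hne (by ext l; simp [Matrix.submatrix, hij])
  obtain ⟨g, hg⟩ := (Matrix.toLin' A).exists_leftInverse_of_injective
    (by rwa [LinearMap.ker_eq_bot, Matrix.toLin'_apply'])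
  have hBA : LinearMap.toMatrix' g * A = 1 := by
    have : Matrix.toLin' (LinearMap.toMatrix' g * A) = LinearMap.id := by
      rw [show (LinearMap.toMatrix' g * A : Matrix (Fin k) (Fin k) F)
          = LinearMap.toMatrix' g * LinearMap.toMatrix' (Matrix.toLin' A) by
        rw [LinearMap.toMatrix'_toLin'], ← LinearMap.toMatrix'_comp, Matrix.toLin'_toMatrix', hg]
    have := congrArg LinearMap.toMatrix' this
    rwa [LinearMap.toMatrix'_toLin', LinearMap.toMatrix'_id] at this
  have : (1 : Matrix (Fin k) (Fin k) F).det = 0 := by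
    rw [← hBA]
    calc ((LinearMap.toMatrix' g) * A).det
        = ∑ f : Fin k → Fin n, (∏ i, LinearMap.toMatrix' g i (f i)) * (A.submatrix f id).det := by
          have h1 : (LinearMap.toMatrix' g * A).det =
              Matrix.detRowAlternating (fun i : Fin k =>
                ∑ j : Fin n, LinearMap.toMatrix' g i j • fun l => A j l) := by
            congr 1; ext i l; simp [Matrix.mul_apply]
          have h2 := (Matrix.detRowAlternating :
              AlternatingMap F (Fin k → F) F (Fin k)).toMultilinearMap.map_sum
            (g := fun (i : Fin k) (j : Fin n) => LinearMap.toMatrix' g i j • fun l => A j l)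
          rw [h1]
          refine h2.trans (Finset.sum_congr rfl fun f _ => ?_)
          exact ((Matrix.detRowAlternating :
              AlternatingMap F (Fin k → F) F (Fin k)).toMultilinearMap.map_smul_univ
            (fun i => LinearMap.toMatrix' g i (f i)) (fun i l => A (f i) l)).trans rfl
      _ = 0 := by simp [hsub]
  simp at this

/-- Reduction mod `p` preserves injectivity of `mulVecLin` for matrices over
`ZMod (p ^ r)`. -/
lemma aux_map_injective_of_injective {p r n k : ℕ} (hp : p.Prime) (hr : 1 ≤ r)
    (A : Matrix (Fin n) (Fin k) (ZMod (p ^ r)))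
    (hA : Function.Injective A.mulVecLin) :
    Function.Injective ((A.map (ZMod.castHom (dvd_pow_self p (by omega : r ≠ 0)) (ZMod p))).mulVecLin) := by
  classical
  set f := ZMod.castHom (dvd_pow_self p (by omega : r ≠ 0)) (ZMod p) with hf
  have hNeZero : NeZero (p ^ r) := ⟨pow_ne_zero r hp.ne_zero⟩
  haveI : NeZero p := ⟨hp.ne_zero⟩
  rw [← LinearMap.ker_eq_bot, LinearMap.ker_eq_bot']
  intro w hw
  set v : Fin k → ZMod (p ^ r) := fun i => ((w i).val : ZMod (p ^ r)) with hv
  have hfv : ∀ i, f (v i) = w i := by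
    intro i
    have : f (v i) = (((w i).val : ℕ) : ZMod p) := by simp [hv]
    rw [this]
    simp [ZMod.natCast_val, ZMod.cast_id]
  have hmv : ∀ j, f ((A.mulVec v) j) = 0 := by
    intro j
    have : (A.map f).mulVec w j = 0 := by
      have := congrFun (show (A.map f).mulVecLin w = 0 from hw) j
      simpa using this
    rw [← this]
    simp only [Matrix.mulVec, dotProduct, map_sum, _root_.map_mul, Matrix.map_apply]
    exact Finset.sum_congr rfl fun i _ => by rw [hfv]
  have hker : A.mulVecLin ((p : ZMod (p ^ r)) ^ (r - 1) • v) = 0 := by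
    ext j
    have h1 : (A.mulVecLin ((p : ZMod (p ^ r)) ^ (r - 1) • v)) j
        = (p : ZMod (p ^ r)) ^ (r - 1) * (A.mulVec v j) := by
      simp [Matrix.mulVecLin, Matrix.mulVec_smul]
    rw [h1]
    have h2 := hmv j
    set x := A.mulVec v j with hx
    have hpx : (p : ℕ) ∣ x.val := by
      have : ((x.val : ℕ) : ZMod p) = 0 := by
        have : f x = ((x.val : ℕ) : ZMod p) := by
          conv_lhs => rw [show x = ((x.val : ℕ) : ZMod (p^r)) by simp [ZMod.natCast_val, ZMod.cast_id]]
          simp [f]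
        rw [← this, h2]
      exact (ZMod.natCast_eq_zero_iff _ _).1 this
    obtain ⟨c, hc⟩ := hpx
    have : x = ((p * c : ℕ) : ZMod (p ^ r)) := by
      rw [← hc]; simp [ZMod.natCast_val, ZMod.cast_id]
    rw [this]
    push_cast
    rw [show ((p:ZMod (p^r)) ^ (r-1)) * ((p:ZMod (p^r)) * (c:ZMod (p^r)))
        = (p:ZMod (p^r)) ^ r * c by rw [← mul_assoc, ← pow_succ]; congr 2; omega]
    rw [show ((p : ZMod (p^r)) ^ r) = ((p ^ r : ℕ) : ZMod (p^r)) by push_cast; ring,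
      ZMod.natCast_self, zero_mul]
    rfl
  have hv0 : (p : ZMod (p ^ r)) ^ (r - 1) • v = 0 := by
    apply hA
    rw [hker, map_zero]
  funext i
  have : (p : ZMod (p ^ r)) ^ (r - 1) * v i = 0 := by
    have := congrFun hv0 i; simpa using this
  have hz : ((p ^ (r - 1) * (w i).val : ℕ) : ZMod (p ^ r)) = 0 := by
    push_cast
    simpa [hv] using this
  rw [ZMod.natCast_eq_zero_iff] at hz
  have hdvd : p ∣ (w i).val := by
    have h1 : p ^ (r - 1) * p ∣ p ^ (r - 1) * (w i).val := by
      rw [← pow_succ]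
      exact dvd_trans (pow_dvd_pow p (by omega)) hz
    exact (mul_dvd_mul_iff_left (pow_ne_zero (r-1) hp.ne_zero)).1 h1
  have : ((w i).val : ZMod p) = 0 := (ZMod.natCast_eq_zero_iff _ _).2 hdvd
  have h2 : ((w i).val : ZMod p) = w i := by simp [ZMod.natCast_val, ZMod.cast_id]
  rw [show (0 : Fin k → ZMod p) i = 0 from rfl, ← h2, this]

lemma aux_deg_entry {R : Type*} [Semiring R] {n k : ℕ}
    (G : Matrix (Fin n) (Fin k) (Polynomial R)) (j : Fin n) (i : Fin k) :
    (G j i).natDegree ≤ constraintLength G i :=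
  Finset.le_sup (f := fun j => (G j i).natDegree) (Finset.mem_univ j)

/-- The coefficient of a full-size minor of `G(z)` at the complexity is the
corresponding minor of the leading coefficient matrix. -/
lemma aux_coeff_det {R : Type*} [CommRing R] {n k : ℕ}
    (G : Matrix (Fin n) (Fin k) (Polynomial R)) (ρ : Fin k ↪ Fin n) :
    ((G.submatrix ρ id).det).coeff (complexity G)
      = ((leadingCoeffMatrix G).submatrix ρ id).det := by
  classical
  rw [Matrix.det_apply, Matrix.det_apply, complexity, Polynomial.finset_sum_coeff]
  refine Finset.sum_congr rfl fun σ _ => ?_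
  rw [Units.smul_def, Units.smul_def, Polynomial.coeff_smul]
  congr 1
  simp only [Matrix.submatrix_apply, id_eq]
  rw [aux_coeff_prod_varying Finset.univ (fun i => G (ρ (σ i)) i) (fun i => constraintLength G i)
    (fun i _ => aux_deg_entry G (ρ (σ i)) i)]
  rfl

/-- Full-size minors of `G(z)` have degree at most the complexity. -/
lemma aux_natDegree_det_le {R : Type*} [CommRing R] {n k : ℕ}
    (G : Matrix (Fin n) (Fin k) (Polynomial R)) (ρ : Fin k ↪ Fin n) :
    ((G.submatrix ρ id).det).natDegree ≤ complexity G := by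
  classical
  rw [Matrix.det_apply]
  refine Polynomial.natDegree_sum_le_of_forall_le _ _ fun σ _ => ?_
  rw [Units.smul_def, zsmul_eq_mul]
  refine (Polynomial.natDegree_mul_le).trans ?_
  rw [Polynomial.natDegree_intCast, zero_add]
  refine (Polynomial.natDegree_prod_le _ _).trans ?_
  refine Finset.sum_le_sum fun i _ => ?_
  simpa using aux_deg_entry G (ρ (σ i)) i

end Aux

/-- Let `p` be a prime, `r ≥ 1`, and `R = ℤ/p^rℤ`. Let
`G(z) ∈ Mat_{n×k}(R[z])` (with `n ≥ k`) be an injective polynomial matrix with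
column degrees `ν_1, …, ν_k` whose column-wise leading coefficient matrix
`G_h ∈ Mat_{n×k}(R)` is injective (the Predictable Degree Property). Then the
maximum of the degrees of the `k×k` (full-size) minors of `G(z)` equals
`δ_{G(z)} = Σ_i ν_i`. -/
theorem pdp_max_minor_degree (p r n k : ℕ) (hp : p.Prime) (hr : 1 ≤ r) (hkn : k ≤ n)
    (G : Matrix (Fin n) (Fin k) (Polynomial (ZMod (p ^ r))))
    (hGinj : Function.Injective G.mulVecLin)
    (hPDP : Function.Injective (leadingCoeffMatrix G).mulVecLin) :
    (Finset.univ.sup fun ρ : Fin k ↪ Fin n =>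
        ((G.submatrix ρ id).det).natDegree) = complexity G := by
  classical
  haveI : Fact p.Prime := ⟨hp⟩
  haveI : NeZero (p ^ r) := ⟨pow_ne_zero r hp.ne_zero⟩
  set f := ZMod.castHom (dvd_pow_self p (by omega : r ≠ 0)) (ZMod p) with hf
  -- reduce mod p and find a nonzero minor of the leading coefficient matrix
  have hinjmap := aux_map_injective_of_injective hp hr (leadingCoeffMatrix G) hPDP
  obtain ⟨ρ, hρ⟩ := aux_exists_minor_ne_zero_of_injective
    ((leadingCoeffMatrix G).map f) hinjmap
  have hminor : ((leadingCoeffMatrix G).submatrix ρ id).det ≠ 0 := by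
    intro h0
    apply hρ
    have : ((leadingCoeffMatrix G).map f).submatrix ρ id
        = ((leadingCoeffMatrix G).submatrix ρ id).map f := rfl
    rw [this]
    have hdet : (((leadingCoeffMatrix G).submatrix ρ id).map f).det
        = f ((leadingCoeffMatrix G).submatrix ρ id).det := by
      rw [← RingHom.mapMatrix_apply, ← RingHom.map_det]
    rw [hdet, h0, map_zero]
  refine le_antisymm (Finset.sup_le fun ρ' _ => aux_natDegree_det_le G ρ') ?_
  have hcoeff : ((G.submatrix ρ id).det).coeff (complexity G) ≠ 0 := by
    rw [aux_coeff_det]; exact hminor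
  exact le_trans (Polynomial.le_natDegree_of_ne_zero hcoeff)
    (Finset.le_sup (f := fun ρ' : Fin k ↪ Fin n => ((G.submatrix ρ' id).det).natDegree)
      (Finset.mem_univ ρ))
end

section
/- Let p be a prime, r ≥ 1, and R = ℤ/p^rℤ. Let G ∈ Mat_{n×k}(R) be a matrix whose reduction modulo p, G₀ ∈ Mat_{n×k}(𝔽_p), is injective, and let t ≥ 0 be such that every nonzero codeword of the linear block code Im(G₀) ⊆ 𝔽_p^n has Hamming weight at least 2t+1. If u, u' ∈ R^k and e, e' ∈ R^n satisfy Gu + e = Gu' + e', and for every i ∈ {0, …, r−1} the i-th p-adic digit vectors of e and of e' each have Hamming weight at most t, then u = u' and e = e'. (This expresses that the Greferath–Vellbinger algorithm corrects any error pattern whose p-adic digit components are all correctable by a decoder of correction capability t for the code Im(G₀).) -/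
/-- The `i`-th `p`-adic digit of an element `x ∈ ℤ/p^rℤ`, regarded as an
element of `𝔽_p = ℤ/pℤ`: if `x = Σ_{j<r} x_j p^j` with `0 ≤ x_j < p`, this is
`x_i` mod `p`. -/
def padicDigit (p r : ℕ) (i : ℕ) (x : ZMod (p ^ r)) : ZMod p :=
  ((x.val / p ^ i) % p : ℕ)

lemma exists_p_mul {p r : ℕ} (hp : p.Prime) (x : ZMod (p ^ r))
    (h : (x.val : ZMod p) = 0) : ∃ y : ZMod (p ^ r), x = p * y := by
  haveI : NeZero p := ⟨hp.ne_zero⟩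
  haveI : NeZero (p ^ r) := ⟨pow_ne_zero r hp.ne_zero⟩
  have hdvd : p ∣ x.val := (ZMod.natCast_eq_zero_iff _ _).mp h
  obtain ⟨m, hm⟩ := hdvd
  refine ⟨(m : ZMod (p ^ r)), ?_⟩
  have hx : ((x.val : ℕ) : ZMod (p ^ r)) = x := by
    rw [ZMod.natCast_val, ZMod.cast_id]
  rw [← hx, hm]
  push_cast
  ring

lemma cast_eq_zero_of_pmul {p r i : ℕ} (hp : p.Prime) (hi : i < r) (x : ZMod (p ^ r))
    (h : (p : ZMod (p ^ r)) ^ i * x = 0) : (x.val : ZMod p) = 0 := by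
  haveI : NeZero p := ⟨hp.ne_zero⟩
  haveI : NeZero (p ^ r) := ⟨pow_ne_zero r hp.ne_zero⟩
  have hx : ((p ^ i * x.val : ℕ) : ZMod (p ^ r)) = 0 := by
    push_cast
    rw [ZMod.natCast_val, ZMod.cast_id]
    exact h
  have hdvd : p ^ r ∣ p ^ i * x.val := (ZMod.natCast_eq_zero_iff _ _).mp hx
  have h2 : p ^ i * p ^ (r - i) ∣ p ^ i * x.val := by
    rwa [← pow_add, Nat.add_sub_cancel' hi.le]
  have h3 : p ^ (r - i) ∣ x.val :=
    (Nat.mul_dvd_mul_iff_left (pow_pos hp.pos i)).mp h2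
  have h4 : p ∣ x.val := (dvd_pow_self p (Nat.sub_ne_zero_of_lt hi)).trans h3
  exact (ZMod.natCast_eq_zero_iff _ _).mpr h4

lemma padicDigit_add_pmul {p r i : ℕ} (hp : p.Prime) (hi : i < r) (a x : ZMod (p ^ r)) :
    padicDigit p r i (a + (p : ZMod (p ^ r)) ^ i * x)
      = padicDigit p r i a + (x.val : ZMod p) := by
  haveI : NeZero (p ^ r) := ⟨pow_ne_zero r hp.ne_zero⟩
  have hrepr : a + (p : ZMod (p ^ r)) ^ i * x = ((a.val + p ^ i * x.val : ℕ) : ZMod (p ^ r)) := by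
    push_cast
    rw [ZMod.natCast_val, ZMod.natCast_val, ZMod.cast_id, ZMod.cast_id]
  have hval : (a + (p : ZMod (p ^ r)) ^ i * x).val = (a.val + p ^ i * x.val) % p ^ r := by
    rw [hrepr, ZMod.val_natCast]
  unfold padicDigit
  rw [hval]
  have hsplit : p ^ r = p ^ i * p ^ (r - i) := by rw [← pow_add, Nat.add_sub_cancel' hi.le]
  have hnat : ∀ A B : ℕ, (A + p ^ i * B) % p ^ r / p ^ i % p = (A / p ^ i + B) % p := by
    intro A B
    rw [hsplit, Nat.mod_mul_right_div_self,
      Nat.mod_mod_of_dvd _ (dvd_pow_self p (Nat.sub_ne_zero_of_lt hi)),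
      Nat.add_mul_div_left _ _ (pow_pos hp.pos i)]
  rw [hnat]
  push_cast [ZMod.natCast_mod]
  rfl

/-- (Correction capability of the Greferath–Vellbinger
algorithm.) Let `G ∈ Mat_{n×k}(ℤ/p^rℤ)` be a matrix whose reduction modulo `p`,
`G₀ ∈ Mat_{n×k}(𝔽_p)`, is injective, and let `t` be such that every nonzero
codeword of `Im(G₀) ⊆ 𝔽_p^n` has Hamming weight at least `2t+1`. If
`Gu + e = Gu' + e'` and for every `i ∈ {0,…,r−1}` the `i`-th `p`-adic digit
vectors of `e` and of `e'` each have Hamming weight at most `t`, then `u = u'`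
and `e = e'`. -/
theorem greferath_vellbinger_correction (p r n k t : ℕ) (hp : p.Prime) (hr : 1 ≤ r)
    (G : Matrix (Fin n) (Fin k) (ZMod (p ^ r)))
    (hG₀ : Function.Injective
      (G.map (ZMod.castHom (dvd_pow_self p (Nat.one_le_iff_ne_zero.mp hr)) (ZMod p))).mulVecLin)
    (hdist : ∀ v ∈ LinearMap.range
        (G.map (ZMod.castHom (dvd_pow_self p (Nat.one_le_iff_ne_zero.mp hr)) (ZMod p))).mulVecLin,
      v ≠ 0 → 2 * t + 1 ≤ hammingNorm v)
    (u u' : Fin k → ZMod (p ^ r)) (e e' : Fin n → ZMod (p ^ r))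
    (heq : G.mulVec u + e = G.mulVec u' + e')
    (he : ∀ i < r, hammingNorm (fun j => padicDigit p r i (e j)) ≤ t)
    (he' : ∀ i < r, hammingNorm (fun j => padicDigit p r i (e' j)) ≤ t) :
    u = u' ∧ e = e' := by
  haveI : NeZero p := ⟨hp.ne_zero⟩
  haveI : NeZero (p ^ r) := ⟨pow_ne_zero r hp.ne_zero⟩
  set f := ZMod.castHom (dvd_pow_self p (Nat.one_le_iff_ne_zero.mp hr)) (ZMod p) with hf
  have hfval : ∀ x : ZMod (p ^ r), f x = (x.val : ZMod p) := by
    intro x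
    rw [ZMod.castHom_apply, ZMod.natCast_val]
  have h1 : e' - e = G.mulVec (u - u') := by
    rw [Matrix.mulVec_sub]
    linear_combination -heq
  -- main induction: the difference is divisible by ever higher powers of p
  have key : ∀ i ≤ r, ∃ w : Fin k → ZMod (p ^ r),
      e' - e = fun j => (p : ZMod (p ^ r)) ^ i * G.mulVec w j := by
    intro i
    induction i with
    | zero =>
      intro _
      exact ⟨u - u', by simpa using h1⟩
    | succ i ih =>
      intro hle
      have hi : i < r := hle
      obtain ⟨w, hw⟩ := ih hi.le
      have hpt : ∀ j, e' j = e j + (p : ZMod (p ^ r)) ^ i * G.mulVec w j := by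
        intro j
        have hj := congrFun hw j
        simp only [Pi.sub_apply] at hj
        linear_combination hj
      set c : Fin n → ZMod p := fun j => ((G.mulVec w j).val : ZMod p) with hc
      have hcrange : c ∈ LinearMap.range (G.map f).mulVecLin := by
        refine ⟨f ∘ w, funext fun j => ?_⟩
        rw [Matrix.mulVecLin_apply, ← RingHom.map_mulVec, hfval]
      have hdig : ∀ j, padicDigit p r i (e' j) = padicDigit p r i (e j) + c j := by
        intro j
        rw [hpt j, padicDigit_add_pmul hp hi]
      have hceq : c = (fun j => padicDigit p r i (e' j)) - fun j => padicDigit p r i (e j) := by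
        funext j
        simp only [Pi.sub_apply]
        rw [hdig j]
        ring
      have hnorm : hammingNorm c ≤ 2 * t := by
        rw [hceq, ← neg_add_eq_sub, ← hammingDist_eq_hammingNorm, hammingDist_comm]
        calc hammingDist (fun j => padicDigit p r i (e' j)) (fun j => padicDigit p r i (e j))
            ≤ hammingDist (fun j => padicDigit p r i (e' j)) 0
              + hammingDist 0 (fun j => padicDigit p r i (e j)) := hammingDist_triangle _ _ _
          _ ≤ 2 * t := by
              rw [hammingDist_zero_right, hammingDist_zero_left]
              have := he i hi
              have := he' i hi
              omega
      have hczero : c = 0 := by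
        by_contra hne
        have := hdist c hcrange hne
        omega
      have hwzero : f ∘ w = 0 := by
        apply hG₀
        rw [map_zero]
        apply funext
        intro j
        rw [Matrix.mulVecLin_apply, ← show _ = (0 : Fin n → ZMod p) from hczero]
        rw [hc]
        simp only [← hfval, RingHom.map_mulVec f G w j]
      choose v hv using fun a => exists_p_mul hp (w a)
        (by rw [← hfval]; exact congrFun hwzero a)
      refine ⟨v, ?_⟩
      rw [hw]
      funext j
      have hmv : G.mulVec w j = p * G.mulVec v j := by
        have : w = fun a => p * v a := funext hv
        rw [this]
        have : (fun a => (p : ZMod (p ^ r)) * v a) = (p : ZMod (p ^ r)) • v := rfl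
        rw [this, Matrix.mulVec_smul]
        rfl
      rw [hmv]
      ring
  obtain ⟨w, hw⟩ := key r le_rfl
  have hpr : ((p : ZMod (p ^ r)) : ZMod (p ^ r)) ^ r = 0 := by
    have := ZMod.natCast_self (p ^ r)
    push_cast at this
    exact this
  have hee : e = e' := by
    have : e' - e = 0 := by
      rw [hw]
      funext j
      simp [hpr]
    have := sub_eq_zero.mp this
    exact this.symm
  have hGz : G.mulVec (u - u') = 0 := by
    rw [← h1, hee]
    simp
  have key2 : ∀ i ≤ r, ∃ v : Fin k → ZMod (p ^ r),
      u - u' = fun a => (p : ZMod (p ^ r)) ^ i * v a := by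
    intro i
    induction i with
    | zero =>
      intro _
      exact ⟨u - u', by funext a; simp⟩
    | succ i ih =>
      intro hle
      have hi : i < r := hle
      obtain ⟨v, hv⟩ := ih hi.le
      have hz : ∀ j, (p : ZMod (p ^ r)) ^ i * G.mulVec v j = 0 := by
        intro j
        have : G.mulVec (u - u') j = 0 := congrFun hGz j
        rw [hv] at this
        have hsmul : (fun a => (p : ZMod (p ^ r)) ^ i * v a) = (p : ZMod (p ^ r)) ^ i • v := rfl
        rw [hsmul, Matrix.mulVec_smul] at this
        exact this
      have hvz : f ∘ v = 0 := by
        apply hG₀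
        rw [map_zero]
        funext j
        rw [Matrix.mulVecLin_apply, ← RingHom.map_mulVec, hfval,
          cast_eq_zero_of_pmul hp hi _ (hz j)]
        rfl
      choose v' hv' using fun a => exists_p_mul hp (v a)
        (by rw [← hfval]; exact congrFun hvz a)
      refine ⟨v', ?_⟩
      rw [hv]
      funext a
      rw [hv' a]
      ring
  obtain ⟨v, hv⟩ := key2 r le_rfl
  have huu : u = u' := by
    have : u - u' = 0 := by
      rw [hv]
      funext a
      simp [hpr]
    exact sub_eq_zero.mp this
  exact ⟨huu, hee⟩
end

section
/- Let p be a prime, r ≥ 1, and R = ℤ/p^rℤ. Let H ∈ Mat_{q×n}(R) be a parity-check matrix and let H₀ ∈ Mat_{q×n}(𝔽_p) be its reduction modulo p. Let t ≥ 0 be such that every nonzero element of the linear block code Ker(H₀) ⊆ 𝔽_p^n has Hamming weight at least 2t+1. If e, e' ∈ R^n have the same syndrome, He = He', and for every i ∈ {0, …, r−1} the i-th p-adic digit vectors of e and of e' each have Hamming weight at most t, then e = e'. (This expresses that the adapted Torrecillas–Lobillo–Navarro algorithm corrects any error pattern whose p-adic digit components are all correctable by a decoder of correction capability t for the code Ker(H₀).)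 -/
lemma div_sub_div_of_dvd {m a b : ℕ} (hm : 0 < m) (h : (m:ℤ) ∣ (a:ℤ) - b) :
    ((a:ℤ) - b) / m = ((a / m : ℕ) : ℤ) - ((b / m : ℕ) : ℤ) := by
  have hmod : a % m = b % m := by
    have h2 : ((a % m : ℕ) : ℤ) = ((b % m : ℕ) : ℤ) := by
      push_cast
      have : (a:ℤ) % m = (b:ℤ) % m := Int.ModEq.symm (Int.modEq_iff_dvd.mpr (by simpa using h))
      exact this
    exact_mod_cast h2
  have h1 := Nat.div_add_mod a m
  have h2 := Nat.div_add_mod b m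
  have key : (a:ℤ) - b = (m:ℤ) * (((a / m : ℕ) : ℤ) - ((b / m : ℕ) : ℤ)) := by
    have ha : (a:ℤ) = m * (a / m : ℕ) + (a % m : ℕ) := by exact_mod_cast (h1.symm)
    have hb : (b:ℤ) = m * (b / m : ℕ) + (b % m : ℕ) := by exact_mod_cast (h2.symm)
    rw [ha, hb, hmod]; ring
  rw [key, Int.mul_ediv_cancel_left _ (by exact_mod_cast hm.ne')]

/-- (Correction capability of the adapted
Torrecillas–Lobillo–Navarro algorithm.) Let `H ∈ Mat_{q×n}(ℤ/p^rℤ)` be a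
parity-check matrix and `H₀ ∈ Mat_{q×n}(𝔽_p)` its reduction modulo `p`. Let `t`
be such that every nonzero element of `Ker(H₀) ⊆ 𝔽_p^n` has Hamming weight at
least `2t+1`. If `e, e' ∈ (ℤ/p^rℤ)^n` have the same syndrome, `He = He'`, and
for every `i ∈ {0,…,r−1}` the `i`-th `p`-adic digit vectors of `e` and of `e'`
each have Hamming weight at most `t`, then `e = e'`. -/
theorem tln_correction (p r n q t : ℕ) (hp : p.Prime) (hr : 1 ≤ r)
    (H : Matrix (Fin q) (Fin n) (ZMod (p ^ r)))
    (hker : ∀ v ∈ LinearMap.ker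
        (H.map (ZMod.castHom (dvd_pow_self p (Nat.one_le_iff_ne_zero.mp hr)) (ZMod p))).mulVecLin,
      v ≠ 0 → 2 * t + 1 ≤ hammingNorm v)
    (e e' : Fin n → ZMod (p ^ r))
    (hsyn : H.mulVec e = H.mulVec e')
    (he : ∀ i < r, hammingNorm (fun j => padicDigit p r i (e j)) ≤ t)
    (he' : ∀ i < r, hammingNorm (fun j => padicDigit p r i (e' j)) ≤ t) :
    e = e' := by
  haveI : Fact p.Prime := ⟨hp⟩
  have hppos : 0 < p := hp.pos
  haveI : NeZero (p ^ r) := ⟨(pow_pos hppos r).ne'⟩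
  set φ := ZMod.castHom (dvd_pow_self p (Nat.one_le_iff_ne_zero.mp hr)) (ZMod p) with hφ
  have key : ∀ i, i ≤ r → ∀ j, ((p:ℤ))^i ∣ ((e j).val : ℤ) - ((e' j).val : ℤ) := by
    intro i
    induction i with
    | zero => intro _ j; simp
    | succ i ih =>
      intro hi j0
      have hir : i < r := hi
      have ihj : ∀ j, (p:ℤ)^i ∣ ((e j).val : ℤ) - ((e' j).val : ℤ) := ih hir.le
      set w : Fin n → ZMod (p^r) :=
        fun j => (((((e j).val : ℤ) - ((e' j).val : ℤ)) / (p:ℤ)^i : ℤ) : ZMod (p^r)) with hwdef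
      -- fact 1 : p^i * w j = e j - e' j
      have hw1 : ∀ j, (p : ZMod (p^r))^i * w j = e j - e' j := by
        intro j
        have : ((p:ℤ)^i * ((((e j).val : ℤ) - ((e' j).val : ℤ)) / (p:ℤ)^i) : ℤ)
            = (((e j).val : ℤ) - ((e' j).val : ℤ)) := Int.mul_ediv_cancel' (ihj j)
        calc (p : ZMod (p^r))^i * w j
            = ((((p:ℤ)^i * ((((e j).val : ℤ) - ((e' j).val : ℤ)) / (p:ℤ)^i)) : ℤ) : ZMod (p^r)) := by
              push_cast; ring
          _ = (((((e j).val : ℤ) - ((e' j).val : ℤ)) : ℤ) : ZMod (p^r)) := by rw [this]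
          _ = e j - e' j := by push_cast [ZMod.natCast_val, ZMod.cast_id]; ring
      -- syndrome of w vanishes mod p
      have hsw : (p : ZMod (p^r))^i • H.mulVec w = 0 := by
        rw [← Matrix.mulVec_smul]
        have : (p : ZMod (p^r))^i • w = e - e' := by
          funext j; simpa [Pi.smul_apply, smul_eq_mul] using hw1 j
        rw [this, Matrix.mulVec_sub, hsyn, sub_self]
      -- hence each entry of H.mulVec w has val divisible by p
      have hdvd_entry : ∀ k, (p : ℕ) ∣ (H.mulVec w k).val := by
        intro k
        have h0 : (p : ZMod (p^r))^i * (H.mulVec w k) = 0 := congrFun hsw k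
        have hx : ((p^i * (H.mulVec w k).val : ℕ) : ZMod (p^r)) = 0 := by
          push_cast [ZMod.natCast_val, ZMod.cast_id]
          exact h0
        have hdvd : p^r ∣ p^i * (H.mulVec w k).val :=
          (ZMod.natCast_eq_zero_iff _ _).mp hx
        have : p^i * p^(r-i) ∣ p^i * (H.mulVec w k).val := by
          rwa [← pow_add, Nat.add_sub_cancel' hir.le]
        have h2 : p^(r-i) ∣ (H.mulVec w k).val :=
          (mul_dvd_mul_iff_left (a := p^i) (pow_ne_zero _ hppos.ne')).mp this
        exact dvd_trans (dvd_pow_self p (Nat.sub_ne_zero_of_lt hir)) h2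
      -- the mod-p reduction of w is in the kernel
      set v : Fin n → ZMod p := fun j => φ (w j) with hvdef
      have hvker : (H.map φ).mulVec v = 0 := by
        funext k
        rw [Pi.zero_apply]
        have : (H.map φ).mulVec v k = φ (H.mulVec w k) := by
          simp [Matrix.mulVec, dotProduct, map_sum, v]
        rw [this]
        have : φ (H.mulVec w k) = (((H.mulVec w k).val : ℕ) : ZMod p) := by
          simp [hφ, ZMod.castHom_apply, ZMod.natCast_val]
        rw [this, ZMod.natCast_eq_zero_iff]
        exact hdvd_entry k
      -- v equals the difference of digit vectors
      have hvd : ∀ j, v j = padicDigit p r i (e j) - padicDigit p r i (e' j) := by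
        intro j
        have hdiv := div_sub_div_of_dvd (pow_pos hppos i)
          (by exact_mod_cast ihj j : ((p^i : ℕ):ℤ) ∣ ((e j).val : ℤ) - ((e' j).val : ℤ))
        have : v j = (((((e j).val : ℤ) - ((e' j).val : ℤ)) / (p:ℤ)^i : ℤ) : ZMod p) := by
          simp [hvdef, hwdef, map_intCast]
        rw [this]
        have hcast : ((p:ℤ)^i) = ((p^i : ℕ) : ℤ) := by push_cast; ring
        rw [hcast, hdiv]
        simp only [padicDigit]
        rw [Int.cast_sub, Int.cast_natCast, Int.cast_natCast, ZMod.natCast_mod, ZMod.natCast_mod]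
      -- bound on the hamming norm of v
      have hbound : hammingNorm v ≤ 2 * t := by
        have : v = (fun j => padicDigit p r i (e j)) - (fun j => padicDigit p r i (e' j)) := by
          funext j; simpa using hvd j
        rw [this, sub_eq_neg_add, ← hammingDist_eq_hammingNorm, hammingDist_comm]
        calc hammingDist (fun j => padicDigit p r i (e j)) (fun j => padicDigit p r i (e' j))
            ≤ hammingDist (fun j => padicDigit p r i (e j)) 0
              + hammingDist 0 (fun j => padicDigit p r i (e' j)) := hammingDist_triangle _ _ _
          _ ≤ t + t := by
              rw [hammingDist_zero_right, hammingDist_zero_left]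
              exact Nat.add_le_add (he i hir) (he' i hir)
          _ = 2 * t := by ring
      -- hence v = 0
      have hv0 : v = 0 := by
        by_contra hne
        have hmem : v ∈ LinearMap.ker (H.map φ).mulVecLin := by
          simpa [LinearMap.mem_ker, Matrix.mulVecLin_apply] using hvker
        have := hker v hmem hne
        omega
      -- conclude divisibility by p^(i+1)
      have hvj0 : φ (w j0) = 0 := by
        have := congrFun hv0 j0; simpa [hvdef] using this
      have : ((((((e j0).val : ℤ) - ((e' j0).val : ℤ)) / (p:ℤ)^i : ℤ)) : ZMod p) = 0 := by
        rw [← map_intCast φ]; exact hvj0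
      have hpdvd : (p:ℤ) ∣ ((((e j0).val : ℤ) - ((e' j0).val : ℤ)) / (p:ℤ)^i) := by
        exact_mod_cast (ZMod.intCast_zmod_eq_zero_iff_dvd _ p).mp this
      have := Int.mul_ediv_cancel' (ihj j0)
      obtain ⟨c, hc⟩ := hpdvd
      refine ⟨c, ?_⟩
      rw [← this, hc, pow_succ]; ring
  funext j
  have hj := key r le_rfl j
  have hz : (((((e j).val : ℤ) - ((e' j).val : ℤ)) : ℤ) : ZMod (p^r)) = 0 := by
    rw [ZMod.intCast_zmod_eq_zero_iff_dvd]
    exact_mod_cast hj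
  have : e j - e' j = 0 := by
    rw [← hz]; push_cast [ZMod.natCast_val, ZMod.cast_id]; ring
  exact sub_eq_zero.mp this
end
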